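/- Let G be a free monoid on at least one generator and w₁, …, w_n ∈ G. The following are equivalent: (1) the family is left cofinite (all but finitely many y ∈ G can be written y = x w_i for some x ∈ G and some i) and left independent (no w_i equals x w_j with i ≠ j); (2) the family is minimally left cofinite (left cofinite but no proper subfamily is); (3) the family is maximally left independent (left independent but every extension by one element is left dependent). -/

import Mathlib

/-- A family of elements of a free monoid is left cofinite if all but finitely
many elements are left multiples of some member of the family. -/
def LeftCofinite {α : Type*} (l : List (FreeMonoid α)) : Prop :=
  {y : FreeMonoid α | ¬ ∃ x w, w ∈ l ∧ y = x * w}.Finite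

/-- A family is left dependent if some member is a left multiple of a different
member. -/
def LeftDependent {α : Type*} (l : List (FreeMonoid α)) : Prop :=
  ∃ (i j : Fin l.length) (x : FreeMonoid α), i ≠ j ∧ l.get i = x * l.get j

private lemma fm_mul_iff_suffix {α : Type*} {y w : FreeMonoid α} :
    (∃ x : FreeMonoid α, y = x * w) ↔ FreeMonoid.toList w <:+ FreeMonoid.toList y := by
  constructor
  · rintro ⟨x, rfl⟩
    exact ⟨FreeMonoid.toList x, (FreeMonoid.toList_mul x w).symm⟩
  · rintro ⟨t, ht⟩
    refine ⟨FreeMonoid.ofList t, FreeMonoid.toList.injective ?_⟩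
    rw [FreeMonoid.toList_mul, FreeMonoid.toList_ofList, ht]

/-- Suffix trichotomy in a free monoid. -/
private lemma fm_trich {α : Type*} {y w₁ w₂ : FreeMonoid α}
    (h1 : ∃ x, y = x * w₁) (h2 : ∃ x, y = x * w₂) :
    (∃ z, w₁ = z * w₂) ∨ (∃ z, w₂ = z * w₁) := by
  rw [fm_mul_iff_suffix] at h1 h2 ⊢
  rw [fm_mul_iff_suffix]
  exact (List.suffix_or_suffix_of_suffix h2 h1)

/-- The free monoid on a nonempty type is infinite, so for any finite set `S`
and any `w` there is `x` with `x * w ∉ S`. -/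
private lemma fm_exists_not_mem {α : Type*} [Nonempty α] {S : Set (FreeMonoid α)}
    (hS : S.Finite) (w : FreeMonoid α) : ∃ x, x * w ∉ S := by
  have hinf : Infinite (FreeMonoid α) :=
    Infinite.of_injective FreeMonoid.ofList
      (fun a b h => by simpa using congrArg FreeMonoid.toList h)
  have hr : (Set.range (fun x : FreeMonoid α => x * w)).Infinite :=
    Set.infinite_range_of_injective (fun a b h => mul_right_cancel h)
  obtain ⟨y, hyr, hyS⟩ := (hr.diff hS).nonempty
  obtain ⟨x, rfl⟩ := hyr
  exact ⟨x, hyS⟩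

/-- The set of suffixes of a word is finite. -/
private lemma fm_suffixes_finite {α : Type*} (w : FreeMonoid α) :
    {y : FreeMonoid α | ∃ x, w = x * y}.Finite := by
  have hfin : {t : List α | t <:+ FreeMonoid.toList w}.Finite := by
    refine ((FreeMonoid.toList w).tails.finite_toSet).subset ?_
    intro t ht
    simpa [List.mem_tails] using ht
  refine Set.Finite.subset (hfin.preimage (FreeMonoid.toList.injective.injOn)) ?_
  rintro y ⟨x, rfl⟩
  exact ⟨FreeMonoid.toList x, (FreeMonoid.toList_mul x y).symm⟩

/-- If `l` is left cofinite and left dependent at index `i`, then erasing `i`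
keeps it left cofinite. -/
private lemma fm_erase_cof {α : Type*} {l : List (FreeMonoid α)} (hcf : LeftCofinite l)
    {i j : Fin l.length} (hij : i ≠ j) {x : FreeMonoid α} (hx : l.get i = x * l.get j) :
    LeftCofinite (l.eraseIdx i) := by
  refine hcf.subset ?_
  intro y hy
  simp only [Set.mem_setOf_eq] at hy ⊢
  rintro ⟨x', w, hw, hyw⟩
  apply hy
  obtain ⟨k, hk⟩ := List.mem_iff_get.mp hw
  by_cases hki : k = i
  · subst hki
    refine ⟨x' * x, l.get j, ?_, ?_⟩
    · exact List.mem_eraseIdx_iff_getElem.mpr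
        ⟨j, j.isLt, fun h => hij (Fin.ext h.symm), rfl⟩
    · rw [hyw, ← hk, hx, mul_assoc]
  · exact ⟨x', w, List.mem_eraseIdx_iff_getElem.mpr
      ⟨k, k.isLt, fun h => hki (Fin.ext h), hk⟩, hyw⟩

/-- If erasing some index keeps `l` left cofinite, then `l` is left dependent. -/
private lemma fm_dep_of_erase_cof {α : Type*} [Nonempty α] {l : List (FreeMonoid α)}
    (i : Fin l.length) (h : LeftCofinite (l.eraseIdx i)) : LeftDependent l := by
  obtain ⟨x, hx⟩ := fm_exists_not_mem h (l.get i)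
  simp only [Set.mem_setOf_eq, not_not] at hx
  obtain ⟨x', w, hw, he⟩ := hx
  obtain ⟨k, hk, hki, hkw⟩ := List.mem_eraseIdx_iff_getElem.mp hw
  have hget : l.get ⟨k, hk⟩ = w := hkw
  have hne : (⟨k, hk⟩ : Fin l.length) ≠ i := fun h => hki (congrArg Fin.val h)
  rcases fm_trich (w₁ := l.get i) (w₂ := w) ⟨x, rfl⟩ ⟨x', he⟩ with ⟨z, hz⟩ | ⟨z, hz⟩
  · exact ⟨i, ⟨k, hk⟩, z, hne.symm, by rw [hz, hget]⟩
  · exact ⟨⟨k, hk⟩, i, z, hne, by rw [hget, hz]⟩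

theorem leftCofinite_independent_tfae {α : Type*} [Nonempty α]
    (l : List (FreeMonoid α)) :
    ((LeftCofinite l ∧ ¬ LeftDependent l) ↔
      (LeftCofinite l ∧ ∀ i : Fin l.length, ¬ LeftCofinite (l.eraseIdx i))) ∧
    ((LeftCofinite l ∧ ¬ LeftDependent l) ↔
      (¬ LeftDependent l ∧ ∀ g : FreeMonoid α, LeftDependent (g :: l))) := by
  constructor
  · constructor
    · rintro ⟨hcf, hind⟩
      exact ⟨hcf, fun i hco => hind (fm_dep_of_erase_cof i hco)⟩
    · rintro ⟨hcf, hmin⟩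
      refine ⟨hcf, fun hdep => ?_⟩
      obtain ⟨i, j, x, hij, hx⟩ := hdep
      exact hmin i (fm_erase_cof hcf hij hx)
  · constructor
    · rintro ⟨hcf, hind⟩
      refine ⟨hind, fun g => ?_⟩
      obtain ⟨x, hx⟩ := fm_exists_not_mem hcf g
      simp only [Set.mem_setOf_eq, not_not] at hx
      obtain ⟨x', w, hw, he⟩ := hx
      obtain ⟨k, hk⟩ := List.mem_iff_get.mp hw
      have h0 : (⟨0, Nat.succ_pos _⟩ : Fin (g :: l).length) ≠
          ⟨k.1 + 1, Nat.succ_lt_succ k.isLt⟩ := by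
        intro h
        exact Nat.succ_ne_zero _ (congrArg Fin.val h).symm
      rcases fm_trich (w₁ := g) (w₂ := w) ⟨x, rfl⟩ ⟨x', he⟩ with ⟨z, hz⟩ | ⟨z, hz⟩
      · refine ⟨⟨0, Nat.succ_pos _⟩, ⟨k.1 + 1, Nat.succ_lt_succ k.isLt⟩, z, h0, ?_⟩
        show g = z * l.get ⟨k.1, k.isLt⟩
        rw [hz, show l.get ⟨k.1, k.isLt⟩ = w from hk]
      · refine ⟨⟨k.1 + 1, Nat.succ_lt_succ k.isLt⟩, ⟨0, Nat.succ_pos _⟩, z, h0.symm, ?_⟩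
        show l.get ⟨k.1, k.isLt⟩ = z * g
        rw [show l.get ⟨k.1, k.isLt⟩ = w from hk, hz]
    · rintro ⟨hind, hmax⟩
      refine ⟨?_, hind⟩
      have hfin : (⋃ w ∈ l, {y : FreeMonoid α | ∃ x, w = x * y}).Finite :=
        (l.finite_toSet).biUnion (fun w _ => fm_suffixes_finite w)
      refine hfin.subset ?_
      intro y hy
      simp only [Set.mem_setOf_eq] at hy
      obtain ⟨i, j, x, hij, hx⟩ := hmax y
      rcases i with ⟨_ | iv, hi⟩ <;> rcases j with ⟨_ | jv, hj⟩
      · exact absurd rfl hij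
      · -- i = 0, j = jv + 1 : y = x * l.get jv, contradiction with hy
        have : y = x * l.get ⟨jv, Nat.lt_of_succ_lt_succ hj⟩ := hx
        exact absurd ⟨x, _, List.get_mem l ⟨jv, Nat.lt_of_succ_lt_succ hj⟩, this⟩ hy
      · -- i = iv + 1, j = 0 : l.get iv = x * y, so y is a suffix
        have hxy : l.get ⟨iv, Nat.lt_of_succ_lt_succ hi⟩ = x * y := hx
        exact Set.mem_biUnion (List.get_mem l ⟨iv, Nat.lt_of_succ_lt_succ hi⟩) ⟨x, hxy⟩
      · -- both successors : l is dependent, contradiction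
        have hne : (⟨iv, Nat.lt_of_succ_lt_succ hi⟩ : Fin l.length) ≠
            ⟨jv, Nat.lt_of_succ_lt_succ hj⟩ := by
          intro h
          exact hij (Fin.ext (congrArg (· + 1) (congrArg Fin.val h)))
        exact absurd ⟨⟨iv, Nat.lt_of_succ_lt_succ hi⟩, ⟨jv, Nat.lt_of_succ_lt_succ hj⟩,
          x, hne, hx⟩ hind
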